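/- Consider the two-vertex graph with vertices v₀, v₁ and edges: self-loop on v₀ with weight (1,-1), self-loop on v₁ with weight (-1,1), edge v₀→v₁ with weight (0,-1), edge v₁→v₀ with weight (0,-1). Then no eventually periodic infinite path ρ from v₀ satisfies both: (a) there exists c₀ ∈ ℕ with c₀ + w₁(ρ[0,k]) ≥ 0 for all k, and (b) liminf_{k→∞} w₂(ρ[0,k])/k ≥ 0. -/

import Mathlib

private lemma step_period (ρ : ℕ → Bool) (w : Bool → Bool → ℤ) (p n : ℕ)
    (hper : ∀ k, p ≤ k → ρ (k + n) = ρ k) :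
    ∀ k, p ≤ k → (∑ i ∈ Finset.range (k + n), w (ρ i) (ρ (i + 1))) -
        (∑ i ∈ Finset.range k, w (ρ i) (ρ (i + 1))) =
      (∑ i ∈ Finset.range (p + n), w (ρ i) (ρ (i + 1))) -
        (∑ i ∈ Finset.range p, w (ρ i) (ρ (i + 1))) := by
  intro k hk
  induction k, hk using Nat.le_induction with
  | base => rfl
  | succ k hk ih =>
    have h1 : ρ (k + n) = ρ k := hper k hk
    have h2 : ρ (k + n + 1) = ρ (k + 1) := by
      have := hper (k + 1) (by omega)
      simpa [Nat.add_right_comm] using this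
    have e1 : k + 1 + n = (k + n) + 1 := by omega
    rw [e1, Finset.sum_range_succ, Finset.sum_range_succ ( n := k), h1, h2]
    linarith

private lemma sum_period (ρ : ℕ → Bool) (w : Bool → Bool → ℤ) (p n : ℕ)
    (hper : ∀ k, p ≤ k → ρ (k + n) = ρ k) :
    ∀ m : ℕ, ∑ i ∈ Finset.range (p + m * n), w (ρ i) (ρ (i + 1)) =
      (∑ i ∈ Finset.range p, w (ρ i) (ρ (i + 1))) +
      m * ((∑ i ∈ Finset.range (p + n), w (ρ i) (ρ (i + 1))) -
           (∑ i ∈ Finset.range p, w (ρ i) (ρ (i + 1)))) := by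
  intro m
  induction m with
  | zero => simp
  | succ m ih =>
    have e : p + (m + 1) * n = (p + m * n) + n := by ring
    have := step_period ρ w p n hper (p + m * n) (by omega)
    rw [e]
    push_cast
    linarith

/-- In the two-vertex graph (`false = v₀`, `true = v₁`) with loop weights
`(1,-1)` on `v₀`, `(-1,1)` on `v₁` and weights `(0,-1)` on both connecting edges,
no eventually periodic infinite path from `v₀` satisfies both the energy
condition on dimension 1 and mean-payoff-inf `≥ 0` on dimension 2. -/
theorem no_finite_memory_win (w₁ w₂ : Bool → Bool → ℤ)
    (h00 : w₁ false false = 1 ∧ w₂ false false = -1)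
    (h11 : w₁ true true = -1 ∧ w₂ true true = 1)
    (h01 : w₁ false true = 0 ∧ w₂ false true = -1)
    (h10 : w₁ true false = 0 ∧ w₂ true false = -1) :
    ∀ ρ : ℕ → Bool, ρ 0 = false →
      (∃ p n : ℕ, 1 ≤ n ∧ ∀ k : ℕ, p ≤ k → ρ (k + n) = ρ k) →
      ¬((∃ c₀ : ℕ, ∀ k : ℕ,
            0 ≤ (c₀ : ℤ) + ∑ i ∈ Finset.range k, w₁ (ρ i) (ρ (i + 1))) ∧
        0 ≤ Filter.atTop.liminf
            (fun k : ℕ => ((∑ i ∈ Finset.range k, w₂ (ρ i) (ρ (i + 1)) : ℤ) : ℝ) / k)) := by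
  rintro ρ h0 ⟨p, n, hn, hper⟩ ⟨⟨c₀, hE⟩, hM⟩
  set S₁ : ℕ → ℤ := fun k => ∑ i ∈ Finset.range k, w₁ (ρ i) (ρ (i + 1)) with hS₁
  set S₂ : ℕ → ℤ := fun k => ∑ i ∈ Finset.range k, w₂ (ρ i) (ρ (i + 1)) with hS₂
  set D₁ : ℤ := S₁ (p + n) - S₁ p with hD₁def
  set D₂ : ℤ := S₂ (p + n) - S₂ p with hD₂def
  have hsum₁ : ∀ m : ℕ, S₁ (p + m * n) = S₁ p + m * D₁ := sum_period ρ w₁ p n hper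
  have hsum₂ : ∀ m : ℕ, S₂ (p + m * n) = S₂ p + m * D₂ := sum_period ρ w₂ p n hper
  -- D₁ ≥ 0 from energy condition
  have hD₁ : 0 ≤ D₁ := by
    by_contra h
    push_neg at h
    have hD : D₁ ≤ -1 := by omega
    set m : ℕ := (c₀ + S₁ p).toNat + 1 with hm
    have h1 := hE (p + m * n)
    rw [show (∑ i ∈ Finset.range (p + m * n), w₁ (ρ i) (ρ (i + 1))) = S₁ (p + m * n) from rfl,
      hsum₁ m] at h1
    have h2 : (m : ℤ) * D₁ ≤ -m := by nlinarith [Int.natCast_pos.mpr (Nat.succ_pos ((c₀ + S₁ p).toNat))]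
    have h3 : c₀ + S₁ p < (m : ℤ) := by
      have := Int.self_le_toNat (c₀ + S₁ p)
      push_cast [hm]
      omega
    linarith
  -- S₂ bounded below by -k
  have hlow : ∀ k : ℕ, -(k : ℤ) ≤ S₂ k := by
    intro k
    induction k with
    | zero => simp [hS₂]
    | succ k ih =>
      have hw : -1 ≤ w₂ (ρ k) (ρ (k + 1)) := by
        cases hρk : ρ k <;> cases hρk1 : ρ (k + 1) <;>
          simp [h00.2, h11.2, h01.2, h10.2]
      have : S₂ (k + 1) = S₂ k + w₂ (ρ k) (ρ (k + 1)) := Finset.sum_range_succ _ _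
      push_cast
      linarith
  -- f is bounded below
  have hfb : ∀ k : ℕ, (-1 : ℝ) ≤ ((S₂ k : ℤ) : ℝ) / k := by
    intro k
    rcases Nat.eq_zero_or_pos k with hk | hk
    · subst hk; simp [hS₂]
    · rw [le_div_iff₀ (by positivity : (0:ℝ) < (k:ℝ))]
      have h := hlow k
      have h' : ((-(k:ℤ) : ℤ) : ℝ) ≤ ((S₂ k : ℤ) : ℝ) := by exact_mod_cast h
      push_cast at h' ⊢
      linarith
  -- D₂ ≥ 0 from mean-payoff condition
  have hD₂ : 0 ≤ D₂ := by
    by_contra h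
    push_neg at h
    have hD : D₂ ≤ -1 := by omega
    have hfreq : ∃ᶠ k in Filter.atTop,
        ((S₂ k : ℤ) : ℝ) / k ≤ -1 / (2 * (n : ℝ)) := by
      rw [Filter.frequently_atTop]
      intro N
      set m : ℕ := 2 * (S₂ p).toNat + p + N + 1 with hm
      refine ⟨p + m * n, by nlinarith [hn, Nat.le_add_left N (2 * (S₂ p).toNat + p + 1)], ?_⟩
      have hk : (0:ℝ) < ((p + m * n : ℕ) : ℝ) := by
        have : 1 ≤ p + m * n := by nlinarith
        exact_mod_cast Nat.lt_of_lt_of_le Nat.zero_lt_one this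
      rw [div_le_div_iff₀ hk (by positivity : (0:ℝ) < 2 * (n:ℝ))]
      have key : (S₂ (p + m * n)) * (2 * n) ≤ -1 * (p + m * n) := by
        rw [hsum₂ m]
        have h1 : (m:ℤ) * D₂ ≤ -m := by
          have hm0 : (0:ℤ) ≤ m := Int.natCast_nonneg m
          nlinarith
        have h2 : S₂ p ≤ ((S₂ p).toNat : ℤ) := Int.self_le_toNat _
        have hmZ : (m:ℤ) = 2 * ((S₂ p).toNat : ℤ) + p + N + 1 := by push_cast [hm]; ring
        have hnZ : (1:ℤ) ≤ n := by exact_mod_cast hn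
        nlinarith [Int.natCast_nonneg N, Int.natCast_nonneg p, Int.natCast_nonneg ((S₂ p).toNat)]
      calc ((S₂ (p + m * n) : ℤ) : ℝ) * (2 * (n:ℝ)) = ((S₂ (p + m * n) * (2 * n) : ℤ) : ℝ) := by
            push_cast; ring
        _ ≤ ((-1 * (p + m * n) : ℤ) : ℝ) := by exact_mod_cast key
        _ = -1 * ((p + m * n : ℕ) : ℝ) := by push_cast; ring
    have hbdd : Filter.IsBoundedUnder (· ≥ ·) Filter.atTop
        (fun k : ℕ => ((S₂ k : ℤ) : ℝ) / k) :=
      Filter.isBoundedUnder_of ⟨-1, fun k => hfb k⟩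
    have := Filter.liminf_le_of_frequently_le hfreq hbdd
    have hn0 : (0:ℝ) < (n:ℝ) := by exact_mod_cast hn
    have hneg : -1 / (2 * (n : ℝ)) < 0 :=
      div_neg_of_neg_of_pos (by norm_num) (by linarith)
    linarith [hM]
  -- rewrite D's as Ico sums
  have hIco₁ : D₁ = ∑ i ∈ Finset.Ico p (p + n), w₁ (ρ i) (ρ (i + 1)) :=
    (Finset.sum_Ico_eq_sub _ (by omega)).symm
  have hIco₂ : D₂ = ∑ i ∈ Finset.Ico p (p + n), w₂ (ρ i) (ρ (i + 1)) :=
    (Finset.sum_Ico_eq_sub _ (by omega)).symm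
  -- all steps in the window are constant
  have hterm : ∀ i ∈ Finset.Ico p (p + n),
      w₁ (ρ i) (ρ (i + 1)) + w₂ (ρ i) (ρ (i + 1)) ≤ 0 := by
    intro i _
    cases hρk : ρ i <;> cases hρk1 : ρ (i + 1) <;>
      simp [h00.1, h00.2, h11.1, h11.2, h01.1, h01.2, h10.1, h10.2]
  have hsum0 : ∑ i ∈ Finset.Ico p (p + n),
      (w₁ (ρ i) (ρ (i + 1)) + w₂ (ρ i) (ρ (i + 1))) = 0 := by
    have hle : ∑ i ∈ Finset.Ico p (p + n),
        (w₁ (ρ i) (ρ (i + 1)) + w₂ (ρ i) (ρ (i + 1))) ≤ 0 :=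
      Finset.sum_nonpos hterm
    have heq : ∑ i ∈ Finset.Ico p (p + n),
        (w₁ (ρ i) (ρ (i + 1)) + w₂ (ρ i) (ρ (i + 1))) = D₁ + D₂ := by
      rw [hIco₁, hIco₂, Finset.sum_add_distrib]
    omega
  have hall0 := (Finset.sum_eq_zero_iff_of_nonpos hterm).mp hsum0
  have hconst : ∀ i, p ≤ i → i < p + n → ρ (i + 1) = ρ i := by
    intro i h1 h2
    have := hall0 i (Finset.mem_Ico.mpr ⟨h1, h2⟩)
    cases hρk : ρ i <;> cases hρk1 : ρ (i + 1) <;>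
      simp_all [h00.1, h00.2, h11.1, h11.2, h01.1, h01.2, h10.1, h10.2]
  have hc : ∀ i, p ≤ i → i ≤ p + n → ρ i = ρ p := by
    intro i hi
    induction i, hi using Nat.le_induction with
    | base => intro _; rfl
    | succ i hi ih =>
      intro hle
      rw [hconst i hi (by omega)]
      exact ih (by omega)
  -- final contradiction
  cases hb : ρ p with
  | false =>
    have hD : D₂ = ∑ _i ∈ Finset.Ico p (p + n), (-1 : ℤ) := by
      rw [hIco₂]
      refine Finset.sum_congr rfl fun i hi => ?_
      rw [Finset.mem_Ico] at hi
      rw [hc i hi.1 (by omega), hc (i+1) (by omega) (by omega), hb, h00.2]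
    rw [Finset.sum_const, Nat.card_Ico] at hD
    simp only [nsmul_eq_mul, mul_neg_one] at hD
    omega
  | true =>
    have hD : D₁ = ∑ _i ∈ Finset.Ico p (p + n), (-1 : ℤ) := by
      rw [hIco₁]
      refine Finset.sum_congr rfl fun i hi => ?_
      rw [Finset.mem_Ico] at hi
      rw [hc i hi.1 (by omega), hc (i+1) (by omega) (by omega), hb, h11.1]
    rw [Finset.sum_const, Nat.card_Ico] at hD
    simp only [nsmul_eq_mul, mul_neg_one] at hD
    omega
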